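/- Let 𝕂 ∈ {ℝ, ℂ}, let d ≥ 1, and let σ : 𝕂 → 𝕂 be a polynomial function of degree m. Let D ⊆ 𝕂^d be an open bounded set. Then the closure of the set of restrictions to D̄ of functions in M_σ, taken in C⁰(D̄, 𝕂) with the supremum norm, equals the set of restrictions to D̄ of polynomials on 𝕂^d of total degree at most m. -/

import Mathlib

open scoped BigOperators

open Polynomial in
lemma nn_taylor_eq_sum {𝕂 : Type} [Field 𝕂] (q : Polynomial 𝕂) (b : 𝕂) :
    q.comp (X + C b) = ∑ i ∈ Finset.range (q.natDegree + 1), b ^ i • Polynomial.hasseDeriv i q := by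
  ext n
  rw [← Polynomial.taylor_apply, Polynomial.taylor_coeff, Polynomial.finset_sum_coeff]
  have hdeg : (Polynomial.hasseDeriv n q).natDegree < q.natDegree + 1 :=
    lt_of_le_of_lt (Polynomial.natDegree_hasseDeriv_le q n) (Nat.lt_succ_of_le (Nat.sub_le _ _))
  rw [Polynomial.eval_eq_sum_range' hdeg]
  refine Finset.sum_congr rfl fun i _ => ?_
  rw [Polynomial.coeff_smul, Polynomial.hasseDeriv_coeff, Polynomial.hasseDeriv_coeff, smul_eq_mul]
  ring_nf
  rw [Nat.choose_symm_add]
  ring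

open Polynomial in
/-- Each Hasse derivative of `q` is in the span of the shifts `q ∘ (X + b)`. -/
lemma nn_hasseDeriv_mem_span {𝕂 : Type} [Field 𝕂] [CharZero 𝕂] (q : Polynomial 𝕂) (i : ℕ)
    (hi : i < q.natDegree + 1) :
    Polynomial.hasseDeriv i q ∈
      Submodule.span 𝕂 {r : Polynomial 𝕂 | ∃ b : 𝕂, r = q.comp (X + C b)} := by
  set m := q.natDegree
  set V : Matrix (Fin (m+1)) (Fin (m+1)) 𝕂 := Matrix.vandermonde (fun t => (t : 𝕂)) with hV
  have hdet : IsUnit V.det := by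
    refine isUnit_iff_ne_zero.mpr (Matrix.det_vandermonde_ne_zero_iff.mpr ?_)
    intro t s hts
    exact Fin.val_injective (Nat.cast_injective hts)
  have hVV : V⁻¹ * V = 1 := Matrix.nonsing_inv_mul V hdet
  -- expansion of the generators
  have hgen : ∀ t : Fin (m+1), q.comp (X + C (t : 𝕂)) =
      ∑ j : Fin (m+1), V t j • Polynomial.hasseDeriv (j : ℕ) q := by
    intro t
    rw [nn_taylor_eq_sum]
    rw [Finset.sum_range fun j => ((t:𝕂)) ^ j • Polynomial.hasseDeriv j q]
    rfl
  -- invert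
  have key : Polynomial.hasseDeriv i q =
      ∑ t : Fin (m+1), (V⁻¹ ⟨i, hi⟩ t) • q.comp (X + C (t : 𝕂)) := by
    calc Polynomial.hasseDeriv i q
        = ∑ j : Fin (m+1), (1 : Matrix (Fin (m+1)) (Fin (m+1)) 𝕂) ⟨i, hi⟩ j •
            Polynomial.hasseDeriv (j : ℕ) q := by
          rw [Finset.sum_eq_single (⟨i, hi⟩ : Fin (m+1))]
          · simp [Matrix.one_apply]
          · intro j _ hj
            simp [Matrix.one_apply, (Ne.symm hj)]
          · simp
      _ = ∑ t : Fin (m+1), (V⁻¹ ⟨i, hi⟩ t) • q.comp (X + C (t : 𝕂)) := by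
          rw [← hVV]
          simp only [hgen, Finset.smul_sum, Matrix.mul_apply]
          rw [Finset.sum_comm]
          refine Finset.sum_congr rfl fun j _ => ?_
          rw [Finset.sum_smul]
          refine Finset.sum_congr rfl fun t _ => ?_
          rw [smul_smul]
  rw [key]
  exact Submodule.sum_mem _ fun t _ =>
    Submodule.smul_mem _ _ (Submodule.subset_span ⟨(t : 𝕂), rfl⟩)

open Polynomial in
lemma nn_pow_mem_span {𝕂 : Type} [Field 𝕂] [CharZero 𝕂] (q : Polynomial 𝕂) (hq0 : q ≠ 0)
    (k : ℕ) (hk : k ≤ q.natDegree) :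
    (X : Polynomial 𝕂) ^ k ∈
      Submodule.span 𝕂 {r : Polynomial 𝕂 | ∃ b : 𝕂, r = q.comp (X + C b)} := by
  set m := q.natDegree with hm
  set U := Submodule.span 𝕂 {r : Polynomial 𝕂 | ∃ b : 𝕂, r = q.comp (X + C b)} with hU
  induction k using Nat.strong_induction_on with
  | _ k ih =>
  have hk' : m - (m - k) = k := by omega
  set R : Polynomial 𝕂 := Polynomial.hasseDeriv (m - k) q with hR
  have hkm : k + (m - k) = m := by omega
  have hcoeff : R.coeff k = (m.choose (m-k)) * q.coeff m := by
    rw [hR, Polynomial.hasseDeriv_coeff, hkm]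
  have hc0 : R.coeff k ≠ 0 := by
    rw [hcoeff]
    exact mul_ne_zero (Nat.cast_ne_zero.mpr (Nat.choose_pos (by omega)).ne')
      (Polynomial.coeff_ne_zero_of_eq_degree (Polynomial.degree_eq_natDegree hq0))
  have hRdeg : R.natDegree ≤ k := le_trans (Polynomial.natDegree_hasseDeriv_le q (m-k)) (le_of_eq hk')
  have hRU : R ∈ U := nn_hasseDeriv_mem_span q (m - k) (by omega)
  set E : Polynomial 𝕂 := R - Polynomial.C (R.coeff k) * X ^ k with hE
  have hEcoeff : ∀ j, k ≤ j → E.coeff j = 0 := by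
    intro j hj
    rcases eq_or_lt_of_le hj with h | h
    · simp [hE, ← h, Polynomial.coeff_C_mul, Polynomial.coeff_X_pow]
    · have h1 : R.coeff j = 0 := Polynomial.coeff_eq_zero_of_natDegree_lt (lt_of_le_of_lt hRdeg h)
      simp [hE, h1, Polynomial.coeff_C_mul, Polynomial.coeff_X_pow, Nat.ne_of_gt h]
  have hEdeg : E.natDegree < k + 1 := Nat.lt_succ_of_le
    (Polynomial.natDegree_le_iff_coeff_eq_zero.mpr fun N hN => hEcoeff N hN.le)
  have hEsum : E = ∑ j ∈ Finset.range (k+1), E.coeff j • X ^ j := by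
    conv_lhs => rw [Polynomial.as_sum_range' E (k+1) hEdeg]
    refine Finset.sum_congr rfl fun j _ => ?_
    rw [← Polynomial.C_mul_X_pow_eq_monomial, ← Polynomial.smul_eq_C_mul]
  have hEU : E ∈ U := by
    rw [hEsum]
    refine Submodule.sum_mem _ fun j hj => ?_
    rcases Nat.lt_succ_iff_lt_or_eq.mp (Finset.mem_range.mp hj) with h | h
    · exact Submodule.smul_mem _ _ (ih j h (le_trans h.le hk))
    · rw [h, hEcoeff k le_rfl, zero_smul]; exact Submodule.zero_mem _
  have hfinal : (X : Polynomial 𝕂) ^ k = (R.coeff k)⁻¹ • (R - E) := by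
    rw [hE, sub_sub_cancel, ← Polynomial.smul_eq_C_mul, smul_smul, inv_mul_cancel₀ hc0, one_smul]
  rw [hfinal]
  exact Submodule.smul_mem _ _ (Submodule.sub_mem _ hRU hEU)

open MvPolynomial in
/-- The linear form `∑ C (v i) * X i`. -/
noncomputable def nnL {𝕂 : Type} [Field 𝕂] {d : ℕ} (v : Fin d → 𝕂) : MvPolynomial (Fin d) 𝕂 :=
  ∑ i, MvPolynomial.C (v i) * MvPolynomial.X i

set_option synthInstance.maxHeartbeats 1000000 in
set_option maxHeartbeats 1000000 in
open MvPolynomial in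
/-- Polarization: each monomial of degree `k` lies in the span of `k`-th powers of
linear forms. -/
lemma nn_monomial_mem_span_powers {𝕂 : Type} [RCLike 𝕂] {d : ℕ} (k : ℕ) (α : Fin d →₀ ℕ)
    (hα : α.sum (fun _ e => e) = k) :
    MvPolynomial.monomial α (1 : 𝕂) ∈
      Submodule.span 𝕂 {p : MvPolynomial (Fin d) 𝕂 | ∃ v : Fin d → 𝕂, p = (nnL v) ^ k} := by
  set Q := Submodule.span 𝕂 {p : MvPolynomial (Fin d) 𝕂 | ∃ v : Fin d → 𝕂, p = (nnL v) ^ k} with hQ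
  by_contra hmem
  -- a functional vanishing on `Q` but not on the monomial
  have hπ : Q.mkQ (MvPolynomial.monomial α (1 : 𝕂)) ≠ 0 := by
    simpa [Submodule.Quotient.mk_eq_zero] using hmem
  obtain ⟨f, hf⟩ : ∃ f : Module.Dual 𝕂 (MvPolynomial (Fin d) 𝕂 ⧸ Q),
      f (Q.mkQ (MvPolynomial.monomial α (1 : 𝕂))) ≠ 0 := by
    by_contra h
    push_neg at h
    exact hπ ((Module.forall_dual_apply_eq_zero_iff 𝕂 _).mp h)
  set φ : Module.Dual 𝕂 (MvPolynomial (Fin d) 𝕂) := f.comp Q.mkQ with hφ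
  have hφQ : ∀ x ∈ Q, φ x = 0 := by
    intro x hx
    simp [hφ, (Submodule.Quotient.mk_eq_zero Q).mpr hx]
  -- the polynomial recording the values of φ on powers of linear forms
  set P : MvPolynomial (Fin d) 𝕂 :=
    ∑ β ∈ Finset.piAntidiag Finset.univ k,
      MvPolynomial.monomial (Finsupp.equivFunOnFinite.symm β)
        ((Nat.multinomial Finset.univ β : 𝕂) * φ (∏ i, MvPolynomial.X i ^ β i)) with hP
  have heval : ∀ v : Fin d → 𝕂, MvPolynomial.eval v P = φ ((nnL v) ^ k) := by
    intro v
    have hpow : (nnL v) ^ k = ∑ β ∈ Finset.piAntidiag Finset.univ k,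
        ((∏ i, v i ^ β i) * (Nat.multinomial Finset.univ β : 𝕂)) •
          (∏ i, MvPolynomial.X i ^ β i) := by
      rw [nnL, Finset.sum_pow_eq_sum_piAntidiag]
      refine Finset.sum_congr rfl fun β _ => ?_
      rw [MvPolynomial.smul_eq_C_mul]
      simp only [mul_pow, Finset.prod_mul_distrib, ← map_pow, ← map_prod, map_mul,
        ← MvPolynomial.C_eq_coe_nat]
      ring
    rw [hpow, hP, map_sum, map_sum]
    refine Finset.sum_congr rfl fun β _ => ?_
    rw [MvPolynomial.eval_monomial, map_smul, smul_eq_mul]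
    rw [Finsupp.prod_pow]
    simp only [Finsupp.coe_equivFunOnFinite_symm]
    ring
  have hP0 : P = 0 := by
    apply MvPolynomial.funext
    intro v
    rw [heval, map_zero]
    exact hφQ _ (Submodule.subset_span ⟨v, rfl⟩)
  rw [Finsupp.sum_fintype _ _ (fun _ => rfl)] at hα
  have hA : (⇑α : Fin d → ℕ) ∈ Finset.piAntidiag Finset.univ k :=
    Finset.mem_piAntidiag.mpr ⟨hα, fun i _ => Finset.mem_univ i⟩
  have hc : MvPolynomial.coeff α P = 0 := by rw [hP0, MvPolynomial.coeff_zero]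
  rw [hP, MvPolynomial.coeff_sum] at hc
  rw [Finset.sum_eq_single (⇑α : Fin d → ℕ)] at hc
  · rw [MvPolynomial.coeff_monomial, if_pos (Finsupp.equivFunOnFinite_symm_coe α)] at hc
    have hmult : ((Nat.multinomial Finset.univ ⇑α : ℕ) : 𝕂) ≠ 0 :=
      Nat.cast_ne_zero.mpr (Nat.multinomial_pos _ _).ne'
    have hφα : φ (∏ i, MvPolynomial.X i ^ α i) = 0 := by
      rcases mul_eq_zero.mp hc with h | h
      · exact absurd h hmult
      · exact h
    have hprod : (∏ i, MvPolynomial.X i ^ α i : MvPolynomial (Fin d) 𝕂) =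
        MvPolynomial.monomial α 1 := by
      rw [← MvPolynomial.prod_X_pow_eq_monomial]
      refine (Finset.prod_subset (Finset.subset_univ _) fun i _ hi => ?_).symm
      rw [Finsupp.notMem_support_iff.mp hi, pow_zero]
    rw [hprod] at hφα
    exact hf hφα
  · intro β _ hβ
    rw [MvPolynomial.coeff_monomial, if_neg]
    intro hcontr
    exact hβ (by rw [← hcontr]; rfl)
  · intro hcontr
    exact absurd hA hcontr

open MvPolynomial in
lemma nn_powL_mem_span {𝕂 : Type} [RCLike 𝕂] {d : ℕ} (q : Polynomial 𝕂) (hq0 : q ≠ 0)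
    (v : Fin d → 𝕂) (k : ℕ) (hk : k ≤ q.natDegree) :
    (nnL v) ^ k ∈ Submodule.span 𝕂 {r : MvPolynomial (Fin d) 𝕂 |
      ∃ (u : Fin d → 𝕂) (b : 𝕂), r = Polynomial.aeval (nnL u + MvPolynomial.C b) q} := by
  have h1 := nn_pow_mem_span q hq0 k hk
  set ψ := (Polynomial.aeval (R := 𝕂) (nnL v) :
    Polynomial 𝕂 →ₐ[𝕂] MvPolynomial (Fin d) 𝕂) with hψ
  have h2 : ψ (Polynomial.X ^ k) ∈ Submodule.map ψ.toLinearMap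
      (Submodule.span 𝕂 {r : Polynomial 𝕂 | ∃ b : 𝕂, r = q.comp (Polynomial.X + Polynomial.C b)}) :=
    Submodule.mem_map_of_mem h1
  rw [Submodule.map_span] at h2
  have hψX : ψ (Polynomial.X ^ k) = (nnL v) ^ k := by
    rw [map_pow, hψ, Polynomial.aeval_X]
  rw [hψX] at h2
  refine Submodule.span_le.mpr ?_ h2
  rintro r ⟨s, ⟨b, rfl⟩, rfl⟩
  refine Submodule.subset_span ⟨v, b, ?_⟩
  rw [AlgHom.toLinearMap_apply, Polynomial.aeval_comp]
  congr 1
  rw [map_add, Polynomial.aeval_X, Polynomial.aeval_C, MvPolynomial.algebraMap_eq]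

open MvPolynomial in
lemma nn_main_span {𝕂 : Type} [RCLike 𝕂] {d : ℕ} (q : Polynomial 𝕂) (hq0 : q ≠ 0)
    (p : MvPolynomial (Fin d) 𝕂) (hp : p.totalDegree ≤ q.natDegree) :
    p ∈ Submodule.span 𝕂 {r : MvPolynomial (Fin d) 𝕂 |
      ∃ (u : Fin d → 𝕂) (b : 𝕂), r = Polynomial.aeval (nnL u + MvPolynomial.C b) q} := by
  rw [← MvPolynomial.support_sum_monomial_coeff p]
  refine Submodule.sum_mem _ fun α hα => ?_
  have hmono : MvPolynomial.monomial α (MvPolynomial.coeff α p) =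
      (MvPolynomial.coeff α p) • MvPolynomial.monomial α (1 : 𝕂) := by
    rw [MvPolynomial.smul_monomial, smul_eq_mul, mul_one]
  rw [hmono]
  refine Submodule.smul_mem _ _ ?_
  have hk : α.sum (fun _ e => e) ≤ q.natDegree := le_trans (MvPolynomial.le_totalDegree hα) hp
  have h1 := nn_monomial_mem_span_powers (𝕂 := 𝕂) (α.sum (fun _ e => e)) α rfl
  refine Submodule.span_le.mpr ?_ h1
  rintro r ⟨v, rfl⟩
  exact nn_powL_mem_span q hq0 v _ hk

open MvPolynomial in
lemma nn_aeval_eq_eval {𝕂 : Type} [RCLike 𝕂] {d : ℕ} (z : Fin d → 𝕂)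
    (p : MvPolynomial (Fin d) 𝕂) : MvPolynomial.aeval z p = MvPolynomial.eval z p := by
  rw [MvPolynomial.aeval_def, ← MvPolynomial.eval₂_id]
  congr 1

open MvPolynomial in
lemma nn_eval_gen {𝕂 : Type} [RCLike 𝕂] {d : ℕ} (q : Polynomial 𝕂) (z u : Fin d → 𝕂) (b : 𝕂) :
    MvPolynomial.eval z (Polynomial.aeval (nnL u + MvPolynomial.C b) q) =
      q.eval ((∑ i, u i * z i) + b) := by
  have h := Polynomial.aeval_algHom_apply (MvPolynomial.aeval z) (nnL u + MvPolynomial.C b) q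
  simp only [nn_aeval_eq_eval] at h
  have h2 : (MvPolynomial.eval z) (nnL u + MvPolynomial.C b) = (∑ i, u i * z i) + b := by
    simp [nnL]
  rw [← h, h2]
  exact congrFun (Polynomial.coe_aeval_eq_eval _) q

open MvPolynomial in
lemma nn_gen_totalDegree {𝕂 : Type} [RCLike 𝕂] {d : ℕ} (q : Polynomial 𝕂) (u : Fin d → 𝕂)
    (b : 𝕂) : (Polynomial.aeval (nnL u + MvPolynomial.C b) q).totalDegree ≤ q.natDegree := by
  rw [Polynomial.aeval_eq_sum_range]
  refine le_trans (MvPolynomial.totalDegree_finset_sum _ _) (Finset.sup_le fun i hi => ?_)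
  refine le_trans (MvPolynomial.totalDegree_smul_le _ _) ?_
  refine le_trans (MvPolynomial.totalDegree_pow _ _) ?_
  have hL : (nnL u + MvPolynomial.C b : MvPolynomial (Fin d) 𝕂).totalDegree ≤ 1 := by
    refine le_trans (MvPolynomial.totalDegree_add _ _) (max_le ?_ ?_)
    · refine le_trans (MvPolynomial.totalDegree_finset_sum _ _) (Finset.sup_le fun j _ => ?_)
      refine le_trans (MvPolynomial.totalDegree_mul _ _) ?_
      simp [MvPolynomial.totalDegree_C, MvPolynomial.totalDegree_X]
    · simp [MvPolynomial.totalDegree_C]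
  calc i * (nnL u + MvPolynomial.C b).totalDegree ≤ i * 1 := Nat.mul_le_mul_left i hL
    _ ≤ q.natDegree := by rw [mul_one]; exact Nat.lt_succ_iff.mp (Finset.mem_range.mp hi)

/-- The class `M_σ` of shallow neural networks on `𝕂^d` with activation `σ`:
functions `z ↦ ∑_k a_k σ(⟨w_k, z⟩ + b_k)` with an arbitrary finite number of neurons. -/
def Shallow {𝕂 : Type} [RCLike 𝕂] (σ : 𝕂 → 𝕂) (d : ℕ) : Set ((Fin d → 𝕂) → 𝕂) :=
  {f | ∃ (n : ℕ) (a : Fin n → 𝕂) (w : Fin n → Fin d → 𝕂) (b : Fin n → 𝕂), 1 ≤ n ∧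
    f = fun z => ∑ k, a k * σ ((∑ i, (starRingEnd 𝕂) (w k i) * z i) + b k)}

/-- The set of restrictions (as continuous maps on `K`) of functions in `S`. -/
def restrictSet {𝕂 : Type} [RCLike 𝕂] {d : ℕ} (S : Set ((Fin d → 𝕂) → 𝕂))
    (K : Set (Fin d → 𝕂)) : Set C(K, 𝕂) :=
  {g | ∃ f ∈ S, ∀ z : K, g z = f (z : Fin d → 𝕂)}

/-- If `σ : 𝕂 → 𝕂` (`𝕂 ∈ {ℝ, ℂ}`) is a polynomial of degree `m` and `D ⊆ 𝕂^d` is open and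
bounded, then the closure of `M_σ` (restricted to `D̄`) in `C⁰(D̄, 𝕂)` equals the set of
restrictions to `D̄` of polynomials on `𝕂^d` of total degree at most `m`. -/
theorem shallow_polynomial_activation_closure {𝕂 : Type} [RCLike 𝕂] (d m : ℕ) (hd : 1 ≤ d)
    (q : Polynomial 𝕂) (hq : q.degree = (m : ℕ)) (σ : 𝕂 → 𝕂) (hσ : σ = fun z => q.eval z)
    (D : Set (Fin d → 𝕂)) (hD : IsOpen D) (hDb : Bornology.IsBounded D) :
    closure (restrictSet (Shallow σ d) (closure D)) =
      restrictSet {f | ∃ p : MvPolynomial (Fin d) 𝕂, p.totalDegree ≤ m ∧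
        f = fun z => MvPolynomial.eval z p} (closure D) := by
  subst hσ
  have hq0 : q ≠ 0 := fun h => by simp [h] at hq
  have hm : q.natDegree = m := Polynomial.natDegree_eq_of_degree_eq_some hq
  set K : Set (Fin d → 𝕂) := closure D with hK
  haveI : CompactSpace K := isCompact_iff_compactSpace.mp hDb.isCompact_closure
  -- the evaluation linear map
  set T : MvPolynomial (Fin d) 𝕂 →ₗ[𝕂] C(K, 𝕂) :=
    { toFun := fun p => ⟨fun z => MvPolynomial.eval (z : Fin d → 𝕂) p,
        (MvPolynomial.continuous_eval p).comp continuous_subtype_val⟩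
      map_add' := fun p r => by ext z; simp
      map_smul' := fun c p => by ext z; simp } with hT
  set W := MvPolynomial.restrictTotalDegree (Fin d) 𝕂 m with hW
  have hset : restrictSet {f | ∃ p : MvPolynomial (Fin d) 𝕂, p.totalDegree ≤ m ∧
      f = fun z => MvPolynomial.eval z p} K = ↑(Submodule.map T W) := by
    ext g
    constructor
    · rintro ⟨f, ⟨p, hdeg, rfl⟩, hg⟩
      exact ⟨p, (MvPolynomial.mem_restrictTotalDegree _ _ _).mpr hdeg,
        (ContinuousMap.ext fun z => (hg z).symm)⟩
    · rintro ⟨p, hp, rfl⟩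
      exact ⟨fun z => MvPolynomial.eval z p,
        ⟨p, (MvPolynomial.mem_restrictTotalDegree _ _ _).mp hp, rfl⟩, fun z => rfl⟩
  apply subset_antisymm
  · -- closure of shallow ⊆ polynomials of degree ≤ m
    rw [hset]
    haveI : Module.Finite 𝕂 (Submodule.map T W) := Module.Finite.map W T
    refine closure_minimal ?_ (Submodule.closed_of_finiteDimensional _)
    rw [← hset]
    rintro g ⟨f, ⟨n, a, w, b, hn, rfl⟩, hg⟩
    refine ⟨fun z => ∑ k : Fin n, a k * (fun z => Polynomial.eval z q)
      ((∑ i, (starRingEnd 𝕂) (w k i) * z i) + b k), ⟨∑ k, MvPolynomial.C (a k) *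
      Polynomial.aeval (nnL (fun i => (starRingEnd 𝕂) (w k i)) + MvPolynomial.C (b k)) q,
      ?_, ?_⟩, hg⟩
    · refine le_trans (MvPolynomial.totalDegree_finset_sum _ _) (Finset.sup_le fun k _ => ?_)
      refine le_trans (MvPolynomial.totalDegree_mul _ _) ?_
      rw [MvPolynomial.totalDegree_C, zero_add, ← hm]
      exact nn_gen_totalDegree q _ _
    · funext z
      rw [map_sum]
      exact Finset.sum_congr rfl fun k _ => by rw [map_mul, MvPolynomial.eval_C, nn_eval_gen]
  · -- polynomials of degree ≤ m ⊆ closure of shallow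
    rintro g ⟨f, ⟨p, hdeg, rfl⟩, hg⟩
    apply subset_closure
    have hp : p ∈ Submodule.span 𝕂 {r : MvPolynomial (Fin d) 𝕂 |
        ∃ (u : Fin d → 𝕂) (b : 𝕂), r = Polynomial.aeval (nnL u + MvPolynomial.C b) q} :=
      nn_main_span q hq0 p (by rw [hm]; exact hdeg)
    rw [Submodule.mem_span_set'] at hp
    obtain ⟨n, c, gens, hsum⟩ := hp
    choose v bb hvb using fun i => (gens i).2
    refine ⟨fun z => ∑ k : Fin (n+1), (Fin.cons 0 c : Fin (n+1) → 𝕂) k *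
      (fun z => Polynomial.eval z q) ((∑ i, (starRingEnd 𝕂) ((Fin.cons 0 (fun j i => (starRingEnd 𝕂) (v j i)) :
        Fin (n+1) → Fin d → 𝕂) k i) * z i) + (Fin.cons 0 bb : Fin (n+1) → 𝕂) k),
      ⟨n+1, _, _, _, Nat.le_add_left 1 n, rfl⟩, ?_⟩
    intro z
    rw [hg z]
    simp only [Fin.sum_univ_succ, Fin.cons_zero, Fin.cons_succ, zero_mul, zero_add]
    rw [← hsum, map_sum]
    refine Finset.sum_congr rfl fun j _ => ?_
    rw [MvPolynomial.smul_eq_C_mul, map_mul, MvPolynomial.eval_C, hvb j, nn_eval_gen]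
    simp [RCLike.conj_conj]
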